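/- arXiv:1810.06741 — 5 statements merged into one kernel-verified Lean document; each statement's English description precedes it below -/
import Mathlib

section
/- Let $P_b$ be uniformly distributed on $[P_{\min}, P_{\max}]$ with $0 \le P_{\min} < P_{\max}$, let $g_a, g_b, P_a > 0$, $\sigma_w^2 \ge 0$, priors $\pi_0, \pi_1 \ge 0$ with $\pi_0 + \pi_1 = 1$, and suppose $g_a P_a \le g_b (P_{\max} - P_{\min})$. Define $\mathbb{P}_E(\gamma) = \pi_0 \mathbb{P}[g_b P_b + \sigma_w^2 > \gamma] + \pi_1 \mathbb{P}[g_b P_b + g_a P_a + \sigma_w^2 < \gamma]$. Then for all $\gamma \in \mathbb{R}$, $\mathbb{P}_E(\gamma) \ge \min(\pi_0, \pi_1)\left(1 - \frac{g_a P_a}{g_b (P_{\max} - P_{\min})}\right)$, and this lower bound is attained: at $\gamma^* = g_b P_{\min} + g_a P_a + \sigma_w^2$ if $\pi_1 \ge \pi_0$, and at $\gamma^* = g_b P_{\max} + \sigma_w^2$ if $\pi_0 > \pi_1$. -/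
open MeasureTheory Set

/-- When `g_a P_a ≤ g_b (Pmax - Pmin)`, the detection error probability at Willie satisfies
`P_E(γ) ≥ min(π0,π1) (1 - g_a P_a / (g_b (Pmax - Pmin)))` for every threshold `γ`, and the
bound is attained at `γ* = g_b Pmin + g_a P_a + σw²` if `π1 ≥ π0`, and at
`γ* = g_b Pmax + σw²` if `π0 > π1`. -/
theorem stmt_3
    {Ω : Type*} [MeasurableSpace Ω] (ℙ : Measure Ω)
    (Pb : Ω → ℝ) (Pmin Pmax ga gb Pa σw2 : ℝ) (π0 π1 : ℝ)
    (hPmin : 0 ≤ Pmin) (hlt : Pmin < Pmax) (hga : 0 < ga) (hgb : 0 < gb)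
    (hPa : 0 < Pa) (hσ : 0 ≤ σw2) (hπ0 : 0 ≤ π0) (hπ1 : 0 ≤ π1)
    (hsum : π0 + π1 = 1)
    (hgap : ga * Pa ≤ gb * (Pmax - Pmin))
    (hunif : pdf.IsUniform Pb (Icc Pmin Pmax) ℙ volume) :
    (∀ γ : ℝ,
      ENNReal.ofReal (min π0 π1 * (1 - ga * Pa / (gb * (Pmax - Pmin)))) ≤
        ENNReal.ofReal π0 * ℙ {ω | gb * Pb ω + σw2 > γ} +
          ENNReal.ofReal π1 * ℙ {ω | gb * Pb ω + ga * Pa + σw2 < γ}) ∧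
    (π1 ≥ π0 →
      ENNReal.ofReal π0 * ℙ {ω | gb * Pb ω + σw2 > gb * Pmin + ga * Pa + σw2} +
          ENNReal.ofReal π1 * ℙ {ω | gb * Pb ω + ga * Pa + σw2 < gb * Pmin + ga * Pa + σw2} =
        ENNReal.ofReal (min π0 π1 * (1 - ga * Pa / (gb * (Pmax - Pmin))))) ∧
    (π0 > π1 →
      ENNReal.ofReal π0 * ℙ {ω | gb * Pb ω + σw2 > gb * Pmax + σw2} +
          ENNReal.ofReal π1 * ℙ {ω | gb * Pb ω + ga * Pa + σw2 < gb * Pmax + σw2} =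
        ENNReal.ofReal (min π0 π1 * (1 - ga * Pa / (gb * (Pmax - Pmin))))) := by
  have hL : (0:ℝ) < Pmax - Pmin := sub_pos.2 hlt
  set L : ℝ := Pmax - Pmin with hLdef
  have hvol : volume (Icc Pmin Pmax) = ENNReal.ofReal L := Real.volume_Icc
  have hns : volume (Icc Pmin Pmax) ≠ 0 := by
    rw [hvol]; exact (ENNReal.ofReal_pos.2 hL).ne'
  have hnt : volume (Icc Pmin Pmax) ≠ ⊤ := by rw [hvol]; exact ENNReal.ofReal_ne_top
  have key : ∀ A : Set ℝ, MeasurableSet A →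
      ℙ (Pb ⁻¹' A) = volume (Icc Pmin Pmax ∩ A) / ENNReal.ofReal L := by
    intro A hA
    rw [hunif.measure_preimage hns hnt hA, hvol]
  have hFAset : ∀ γ : ℝ, {ω | gb * Pb ω + σw2 > γ} = Pb ⁻¹' (Ioi ((γ - σw2) / gb)) := by
    intro γ; ext ω
    simp only [mem_setOf_eq, mem_preimage, mem_Ioi, div_lt_iff₀ hgb, gt_iff_lt]
    constructor <;> intro h <;> nlinarith
  have hMDset : ∀ γ : ℝ, {ω | gb * Pb ω + ga * Pa + σw2 < γ} =
      Pb ⁻¹' (Iio ((γ - ga * Pa - σw2) / gb)) := by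
    intro γ; ext ω
    simp only [mem_setOf_eq, mem_preimage, mem_Iio, lt_div_iff₀ hgb]
    constructor <;> intro h <;> nlinarith
  have hgap' : ga * Pa / gb ≤ L := (div_le_iff₀' hgb).2 hgap
  have hq : (0:ℝ) ≤ ga * Pa / gb := le_of_lt (div_pos (mul_pos hga hPa) hgb)
  have hB : 1 - ga * Pa / (gb * L) = (L - ga * Pa / gb) / L := by
    field_simp
  have hBpos : (0:ℝ) ≤ 1 - ga * Pa / (gb * L) := by
    rw [hB]
    exact div_nonneg (by linarith) hL.le
  refine ⟨?_, ?_, ?_⟩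
  · -- general lower bound
    intro γ
    set c : ℝ := (γ - σw2) / gb with hc
    set d : ℝ := (γ - ga * Pa - σw2) / gb with hd
    have hcd : c - d = ga * Pa / gb := by rw [hc, hd, div_sub_div_same]; congr 1; ring
    have hPFA : ℙ {ω | gb * Pb ω + σw2 > γ} =
        volume (Icc Pmin Pmax ∩ Ioi c) / ENNReal.ofReal L := by
      rw [hFAset, key _ measurableSet_Ioi]
    have hPMD : ℙ {ω | gb * Pb ω + ga * Pa + σw2 < γ} =
        volume (Icc Pmin Pmax ∩ Iio d) / ENNReal.ofReal L := by
      rw [hMDset, key _ measurableSet_Iio]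
    have hsub : Icc Pmin Pmax ⊆
        ((Icc Pmin Pmax ∩ Ioi c) ∪ (Icc Pmin Pmax ∩ Iio d)) ∪ Icc d c := by
      intro x hx
      rcases lt_or_ge c x with h1 | h1
      · exact Or.inl (Or.inl ⟨hx, h1⟩)
      rcases lt_or_ge x d with h2 | h2
      · exact Or.inl (Or.inr ⟨hx, h2⟩)
      · exact Or.inr ⟨h2, h1⟩
    have hvle : ENNReal.ofReal L ≤
        (volume (Icc Pmin Pmax ∩ Ioi c) + volume (Icc Pmin Pmax ∩ Iio d))
          + ENNReal.ofReal (ga * Pa / gb) := by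
      calc ENNReal.ofReal L = volume (Icc Pmin Pmax) := hvol.symm
        _ ≤ volume (((Icc Pmin Pmax ∩ Ioi c) ∪ (Icc Pmin Pmax ∩ Iio d)) ∪ Icc d c) :=
            measure_mono hsub
        _ ≤ volume ((Icc Pmin Pmax ∩ Ioi c) ∪ (Icc Pmin Pmax ∩ Iio d)) + volume (Icc d c) :=
            measure_union_le _ _
        _ ≤ (volume (Icc Pmin Pmax ∩ Ioi c) + volume (Icc Pmin Pmax ∩ Iio d))
              + volume (Icc d c) := by gcongr; exact measure_union_le _ _
        _ = (volume (Icc Pmin Pmax ∩ Ioi c) + volume (Icc Pmin Pmax ∩ Iio d))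
              + ENNReal.ofReal (ga * Pa / gb) := by rw [Real.volume_Icc, hcd]
    have hsumvol : ENNReal.ofReal (L - ga * Pa / gb) ≤
        volume (Icc Pmin Pmax ∩ Ioi c) + volume (Icc Pmin Pmax ∩ Iio d) := by
      rw [ENNReal.ofReal_sub _ hq]
      exact tsub_le_iff_right.2 hvle
    have hfrac : ENNReal.ofReal (1 - ga * Pa / (gb * L)) ≤
        ℙ {ω | gb * Pb ω + σw2 > γ} + ℙ {ω | gb * Pb ω + ga * Pa + σw2 < γ} := by
      rw [hPFA, hPMD, ENNReal.div_add_div_same, hB,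
        ENNReal.ofReal_div_of_pos hL]
      exact ENNReal.div_le_div_right hsumvol _
    set m : ℝ := min π0 π1 with hm
    have hmπ0 : ENNReal.ofReal m ≤ ENNReal.ofReal π0 :=
      ENNReal.ofReal_le_ofReal (min_le_left _ _)
    have hmπ1 : ENNReal.ofReal m ≤ ENNReal.ofReal π1 :=
      ENNReal.ofReal_le_ofReal (min_le_right _ _)
    calc ENNReal.ofReal (m * (1 - ga * Pa / (gb * L)))
        = ENNReal.ofReal m * ENNReal.ofReal (1 - ga * Pa / (gb * L)) :=
          ENNReal.ofReal_mul (le_min hπ0 hπ1)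
      _ ≤ ENNReal.ofReal m *
          (ℙ {ω | gb * Pb ω + σw2 > γ} + ℙ {ω | gb * Pb ω + ga * Pa + σw2 < γ}) := by
          gcongr
      _ = ENNReal.ofReal m * ℙ {ω | gb * Pb ω + σw2 > γ}
          + ENNReal.ofReal m * ℙ {ω | gb * Pb ω + ga * Pa + σw2 < γ} := by ring
      _ ≤ ENNReal.ofReal π0 * ℙ {ω | gb * Pb ω + σw2 > γ}
          + ENNReal.ofReal π1 * ℙ {ω | gb * Pb ω + ga * Pa + σw2 < γ} := by gcongr
  · -- equality at γ* = gb Pmin + ga Pa + σw2 when π1 ≥ π0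
    intro hge
    have hmin : min π0 π1 = π0 := min_eq_left hge
    have hc : (gb * Pmin + ga * Pa + σw2 - σw2) / gb = Pmin + ga * Pa / gb := by
      field_simp; ring
    have hd : (gb * Pmin + ga * Pa + σw2 - ga * Pa - σw2) / gb = Pmin := by
      field_simp
      ring
    have hFA : ℙ {ω | gb * Pb ω + σw2 > gb * Pmin + ga * Pa + σw2} =
        ENNReal.ofReal ((1 - ga * Pa / (gb * L))) := by
      rw [hFAset, key _ measurableSet_Ioi, hc]
      have hseteq : Icc Pmin Pmax ∩ Ioi (Pmin + ga * Pa / gb) = Ioc (Pmin + ga * Pa / gb) Pmax := by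
        ext x
        simp only [mem_inter_iff, mem_Icc, mem_Ioi, mem_Ioc]
        constructor
        · rintro ⟨⟨_, h2⟩, h3⟩; exact ⟨h3, h2⟩
        · rintro ⟨h1, h2⟩; exact ⟨⟨by linarith, h2⟩, h1⟩
      rw [hseteq, Real.volume_Ioc, ← ENNReal.ofReal_div_of_pos hL, hB]
      congr 1
      field_simp
      ring
    have hMD : ℙ {ω | gb * Pb ω + ga * Pa + σw2 < gb * Pmin + ga * Pa + σw2} = 0 := by
      rw [hMDset, key _ measurableSet_Iio, hd]
      have : Icc Pmin Pmax ∩ Iio Pmin = (∅ : Set ℝ) := by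
        ext x
        simp only [mem_inter_iff, mem_Icc, mem_Iio, mem_empty_iff_false, iff_false]
        rintro ⟨⟨h1, _⟩, h2⟩; linarith
      rw [this, measure_empty, ENNReal.zero_div]
    rw [hFA, hMD, mul_zero, add_zero, ← ENNReal.ofReal_mul hπ0, hmin]
  · -- equality at γ* = gb Pmax + σw2 when π0 > π1
    intro hgt
    have hmin : min π0 π1 = π1 := min_eq_right hgt.le
    have hc : (gb * Pmax + σw2 - σw2) / gb = Pmax := by field_simp; ring
    have hd : (gb * Pmax + σw2 - ga * Pa - σw2) / gb = Pmax - ga * Pa / gb := by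
      field_simp; ring
    have hFA : ℙ {ω | gb * Pb ω + σw2 > gb * Pmax + σw2} = 0 := by
      rw [hFAset, key _ measurableSet_Ioi, hc]
      have : Icc Pmin Pmax ∩ Ioi Pmax = (∅ : Set ℝ) := by
        ext x
        simp only [mem_inter_iff, mem_Icc, mem_Ioi, mem_empty_iff_false, iff_false]
        rintro ⟨⟨_, h1⟩, h2⟩; linarith
      rw [this, measure_empty, ENNReal.zero_div]
    have hMD : ℙ {ω | gb * Pb ω + ga * Pa + σw2 < gb * Pmax + σw2} =
        ENNReal.ofReal ((1 - ga * Pa / (gb * L))) := by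
      rw [hMDset, key _ measurableSet_Iio, hd]
      have hseteq : Icc Pmin Pmax ∩ Iio (Pmax - ga * Pa / gb) = Ico Pmin (Pmax - ga * Pa / gb) := by
        ext x
        simp only [mem_inter_iff, mem_Icc, mem_Iio, mem_Ico]
        constructor
        · rintro ⟨⟨h1, _⟩, h3⟩; exact ⟨h1, h3⟩
        · rintro ⟨h1, h2⟩; exact ⟨⟨h1, by linarith⟩, h2⟩
      rw [hseteq, Real.volume_Ico, ← ENNReal.ofReal_div_of_pos hL, hB]
      congr 1
      field_simp
      ring
    rw [hFA, hMD, mul_zero, zero_add, ← ENNReal.ofReal_mul hπ1, hmin]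
end

section
/- Let $\lambda_{ab}, \lambda_{bb}, \mu, \phi > 0$, $\sigma_b^2 \ge 0$ and $0 \le P_{\min} < P_{\max}$. Then $\frac{1}{P_{\max}-P_{\min}}\int_{P_{\min}}^{P_{\max}} \int_0^\infty \left[1 - e^{-\lambda_{ab}\mu(\phi y z + \sigma_b^2)}\right] \lambda_{bb} e^{-\lambda_{bb} y}\, dy\, dz \;=\; 1 - \frac{\lambda_{bb} e^{-\lambda_{ab}\mu\sigma_b^2}}{(P_{\max}-P_{\min})\,\lambda_{ab}\phi\mu}\,\ln\!\left[\frac{\lambda_{bb}+\lambda_{ab}\phi\mu P_{\max}}{\lambda_{bb}+\lambda_{ab}\phi\mu P_{\min}}\right].$ -/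
open MeasureTheory Set Real

lemma aux_exp_int (b : ℝ) (hb : 0 < b) :
    ∫ y in Ioi (0:ℝ), exp (-(b*y)) = 1/b := by
  have := MeasureTheory.integral_comp_mul_left_Ioi (fun x => exp (-x)) 0 hb
  simpa [mul_zero, integral_exp_neg_Ioi, integral_exp_Iic_zero, one_div, smul_eq_mul] using this

lemma aux_inner (lbb c k : ℝ) (hlbb : 0 < lbb) (hc : 0 ≤ c) :
    ∫ y in Ioi (0 : ℝ),
      (1 - exp (-(c * y + k))) * (lbb * exp (-(lbb * y))) =
    1 - lbb * exp (-k) / (lbb + c) := by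
  have h1 : IntegrableOn (fun y => exp (-(lbb * y))) (Ioi (0:ℝ)) := by
    simpa [mul_comm] using exp_neg_integrableOn_Ioi 0 hlbb
  have hpos : 0 < lbb + c := by linarith
  have h2 : IntegrableOn (fun y => exp (-((lbb + c) * y))) (Ioi (0:ℝ)) := by
    simpa only [neg_mul] using exp_neg_integrableOn_Ioi 0 hpos
  have hfun : ∀ y : ℝ, (1 - exp (-(c * y + k))) * (lbb * exp (-(lbb * y)))
      = lbb * exp (-(lbb * y)) - (lbb * exp (-k)) * exp (-((lbb + c) * y)) := by
    intro y
    have key : exp (-(c*y+k)) * (lbb * exp (-(lbb*y))) = lbb * exp (-k) * exp (-((lbb+c)*y)) :=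
      calc exp (-(c*y+k)) * (lbb * exp (-(lbb*y)))
          = lbb * (exp (-(c*y+k)) * exp (-(lbb*y))) := by ring
        _ = lbb * (exp (-k) * exp (-((lbb+c)*y))) := by
            rw [← Real.exp_add, ← Real.exp_add]; congr 1; ring
        _ = lbb * exp (-k) * exp (-((lbb+c)*y)) := by ring
    rw [sub_mul, one_mul, key]
  simp only [hfun]
  rw [integral_sub ((h1.const_mul lbb)) ((h2.const_mul _)),
    integral_const_mul, integral_const_mul, aux_exp_int _ hlbb, aux_exp_int _ hpos]
  field_simp

/-- The transmission outage probability from Alice to Bob (Lemma 1), written as an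
iterated integral over Bob's uniformly distributed AN power and the exponential
self-interference channel gain. -/
theorem stmt_5 (lab lbb mu phi sb2 Pmin Pmax : ℝ)
    (hlab : 0 < lab) (hlbb : 0 < lbb) (hmu : 0 < mu) (hphi : 0 < phi)
    (hsb2 : 0 ≤ sb2) (hPmin : 0 ≤ Pmin) (hlt : Pmin < Pmax) :
    (1 / (Pmax - Pmin)) *
        ∫ z in Pmin..Pmax,
          ∫ y in Ioi (0 : ℝ),
            (1 - exp (-(lab * mu * (phi * y * z + sb2)))) * (lbb * exp (-(lbb * y))) =
      1 - lbb * exp (-(lab * mu * sb2)) / ((Pmax - Pmin) * (lab * phi * mu)) *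
        log ((lbb + lab * phi * mu * Pmax) / (lbb + lab * phi * mu * Pmin)) := by
  set a := lab * phi * mu with ha
  have hapos : 0 < a := by positivity
  set k := lab * mu * sb2 with hk
  have hkpos : 0 ≤ k := by positivity
  have hinner : ∀ z ∈ uIcc Pmin Pmax,
      (∫ y in Ioi (0 : ℝ),
        (1 - exp (-(lab * mu * (phi * y * z + sb2)))) * (lbb * exp (-(lbb * y))))
      = 1 - lbb * exp (-k) / (lbb + a * z) := by
    intro z hz
    have hz0 : 0 ≤ z := by
      rcases hz with ⟨h1, _⟩
      have : min Pmin Pmax = Pmin := min_eq_left hlt.le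
      linarith [this ▸ h1]
    have := aux_inner lbb (a * z) k hlbb (by positivity)
    rw [← this]
    congr 1
    ext y
    congr 3
    ring
  rw [intervalIntegral.integral_congr hinner]
  have hint1 : IntervalIntegrable (fun _ : ℝ => (1:ℝ)) volume Pmin Pmax :=
    intervalIntegrable_const
  have hcont : ContinuousOn (fun z : ℝ => lbb * exp (-k) / (lbb + a * z)) (uIcc Pmin Pmax) := by
    apply ContinuousOn.div continuousOn_const (by fun_prop)
    intro z hz
    have hz0 : 0 ≤ z := by
      rcases hz with ⟨h1, _⟩
      have : min Pmin Pmax = Pmin := min_eq_left hlt.le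
      linarith [this ▸ h1]
    positivity
  have hint2 : IntervalIntegrable (fun z : ℝ => lbb * exp (-k) / (lbb + a * z))
      volume Pmin Pmax := hcont.intervalIntegrable
  rw [intervalIntegral.integral_sub hint1 hint2]
  have hinv : (∫ z in Pmin..Pmax, lbb * exp (-k) / (lbb + a * z))
      = lbb * exp (-k) * (a⁻¹ * log ((lbb + a * Pmax) / (lbb + a * Pmin))) := by
    have comp := intervalIntegral.integral_comp_mul_add (a := Pmin) (b := Pmax)
      (fun u : ℝ => 1 / u) (ne_of_gt hapos) lbb
    have hlog : (∫ u in (a * Pmin + lbb)..(a * Pmax + lbb), 1 / u)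
        = log ((lbb + a * Pmax) / (lbb + a * Pmin)) := by
      rw [integral_one_div]
      · congr 2 <;> ring
      · intro h0
        rcases h0 with ⟨h1, _⟩
        have hPmax : 0 < Pmax := lt_of_le_of_lt hPmin hlt
        have h2 : 0 < min (a * Pmin + lbb) (a * Pmax + lbb) := by
          apply lt_min
          · positivity
          · nlinarith [mul_pos hapos hPmax]
        linarith
    calc (∫ z in Pmin..Pmax, lbb * exp (-k) / (lbb + a * z))
        = lbb * exp (-k) * ∫ z in Pmin..Pmax, 1 / (a * z + lbb) := by
          rw [← intervalIntegral.integral_const_mul]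
          congr 1; ext z; rw [mul_one_div]; congr 1; ring
      _ = lbb * exp (-k) * (a⁻¹ * log ((lbb + a * Pmax) / (lbb + a * Pmin))) := by
          rw [comp, smul_eq_mul, hlog]
  rw [hinv, intervalIntegral.integral_const, smul_eq_mul, mul_one]
  have hne : Pmax - Pmin ≠ 0 := by linarith
  field_simp
end

section
/- Fix $\lambda_{ab}, \lambda_{bb}, \lambda_{aw}, \lambda_{bw}, \mu, \phi, P_a, P_{\max} > 0$, $\sigma_b^2 \ge 0$, and priors $\pi_0, \pi_1 \ge 0$ with $\min(\pi_0,\pi_1)>0$. For $P_{\min} \in [0, P_{\max})$ define $t(P_{\min}) = \frac{\lambda_{bw}P_a}{\lambda_{bw}P_a + \lambda_{aw}(P_{\max}-P_{\min})}$, $\overline{\mathbb{P}_E^*}(P_{\min}) = \min(\pi_0,\pi_1)\,(1 + t\ln t - t^2)$, and $\delta_{ab}(P_{\min}) = 1 - \frac{\lambda_{bb} e^{-\lambda_{ab}\mu\sigma_b^2}}{(P_{\max}-P_{\min})\lambda_{ab}\phi\mu}\ln\!\left[\frac{\lambda_{bb}+\lambda_{ab}\phi\mu P_{\max}}{\lambda_{bb}+\lambda_{ab}\phi\mu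 P_{\min}}\right]$. Then $\overline{\mathbb{P}_E^*}$ is strictly decreasing in $P_{\min}$ and $\delta_{ab}$ is nondecreasing in $P_{\min}$ on $[0,P_{\max})$; consequently, for any covert rate constraint of the form $\pi_1 R_{ab}(1-\delta_{ab}(P_{\min})) \ge \tau$, the choice $P_{\min}^* = 0$ maximizes $\overline{\mathbb{P}_E^*}$ among all feasible $P_{\min}$: if $P_{\min}$ is feasible then so is $0$, and $\overline{\mathbb{P}_E^*}(0) \ge \overline{\mathbb{P}_E^*}(P_{\min})$. -/
open Real Set

lemma g_strict_anti : StrictAntiOn (fun s : ℝ => 1 + s * Real.log s - s ^ 2) (Ioi 0) := by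
  apply strictAntiOn_of_deriv_neg (convex_Ioi 0)
  · apply ContinuousOn.sub
    · exact continuousOn_const.add
        (continuousOn_id.mul (Real.continuousOn_log.mono (fun x hx => ne_of_gt hx)))
    · exact continuousOn_id.pow 2
  · intro s hs
    rw [interior_Ioi] at hs
    have hs0 : (0 : ℝ) < s := hs
    have hd : HasDerivAt (fun s : ℝ => 1 + s * Real.log s - s ^ 2)
        (Real.log s + 1 - 2 * s) s := by
      have h1 : HasDerivAt (fun s : ℝ => s * Real.log s) (1 * Real.log s + s * s⁻¹) s :=
        (hasDerivAt_id s).mul (Real.hasDerivAt_log hs0.ne')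
      have h2 : HasDerivAt (fun s : ℝ => 1 + s * Real.log s)
          (1 * Real.log s + s * s⁻¹) s := h1.const_add 1
      have h3 : HasDerivAt (fun s : ℝ => s ^ 2) (2 * s) s := by
        simpa using (hasDerivAt_pow 2 s)
      have := h2.sub h3
      convert this using 1
      · rfl
      · rfl
      · rfl
      · rw [mul_inv_cancel₀ hs0.ne']; ring
    rw [hd.deriv]
    have hlog : Real.log s ≤ s - 1 := Real.log_le_sub_one_of_pos hs0
    linarith

/-- Proposition 2: with all other parameters fixed, the expected detection error probability
at Willie is strictly decreasing in `Pmin` and the outage probability is nondecreasing in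
`Pmin` on `[0, Pmax)`; consequently `Pmin* = 0` maximizes covertness subject to the covert
rate constraint `π1 R_ab (1 - δ_ab(Pmin)) ≥ τ`. -/
theorem stmt_13 (lab lbb law lbw mu phi Pa Pmax sb2 π0 π1 : ℝ)
    (hlab : 0 < lab) (hlbb : 0 < lbb) (hlaw : 0 < law) (hlbw : 0 < lbw)
    (hmu : 0 < mu) (hphi : 0 < phi) (hPa : 0 < Pa) (hPmax : 0 < Pmax)
    (hsb2 : 0 ≤ sb2) (hπ0 : 0 ≤ π0) (hπ1 : 0 ≤ π1) (hminpos : 0 < min π0 π1)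
    (t : ℝ → ℝ) (PE : ℝ → ℝ) (δ : ℝ → ℝ)
    (ht : ∀ Pmin, t Pmin = lbw * Pa / (lbw * Pa + law * (Pmax - Pmin)))
    (hPE : ∀ Pmin, PE Pmin = min π0 π1 * (1 + t Pmin * log (t Pmin) - (t Pmin) ^ 2))
    (hδ : ∀ Pmin, δ Pmin =
      1 - lbb * exp (-(lab * mu * sb2)) / ((Pmax - Pmin) * (lab * phi * mu)) *
        log ((lbb + lab * phi * mu * Pmax) / (lbb + lab * phi * mu * Pmin))) :
    StrictAntiOn PE (Ico 0 Pmax) ∧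
    MonotoneOn δ (Ico 0 Pmax) ∧
    ∀ τ Rab : ℝ, 0 < Rab →
      ∀ Pmin ∈ Ico (0 : ℝ) Pmax,
        π1 * Rab * (1 - δ Pmin) ≥ τ →
          π1 * Rab * (1 - δ 0) ≥ τ ∧ PE 0 ≥ PE Pmin := by
  have hc : 0 < lbw * Pa := mul_pos hlbw hPa
  -- t is positive and strictly monotone on the interval
  have htpos : ∀ x ∈ Ico (0:ℝ) Pmax, 0 < t x := by
    intro x hx
    rw [ht x]
    have hdx : 0 < lbw * Pa + law * (Pmax - x) := by
      have : 0 < Pmax - x := sub_pos.mpr hx.2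
      positivity
    positivity
  have htmono : ∀ x ∈ Ico (0:ℝ) Pmax, ∀ y ∈ Ico (0:ℝ) Pmax, x < y → t x < t y := by
    intro x hx y hy hxy
    rw [ht x, ht y]
    have hdy : 0 < lbw * Pa + law * (Pmax - y) := by
      have : 0 < Pmax - y := sub_pos.mpr hy.2
      positivity
    apply div_lt_div_of_pos_left hc hdy
    have : law * (Pmax - y) < law * (Pmax - x) := by
      apply mul_lt_mul_of_pos_left _ hlaw
      linarith
    linarith
  have hPEanti : StrictAntiOn PE (Ico 0 Pmax) := by
    intro x hx y hy hxy
    rw [hPE x, hPE y]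
    apply mul_lt_mul_of_pos_left _ hminpos
    exact g_strict_anti (htpos x hx) (htpos y hy) (htmono x hx y hy hxy)
  have hk : 0 < lab * phi * mu := by positivity
  have hE : 0 < Real.exp (-(lab * mu * sb2)) := Real.exp_pos _
  have hδmono : MonotoneOn δ (Ico 0 Pmax) := by
    intro x hx y hy hxy
    rcases eq_or_lt_of_le hxy with rfl | hlt
    · exact le_refl _
    · set k := lab * phi * mu with hkdef
      set ax := lbb + k * x with haxdef
      set ay := lbb + k * y with haydef
      set v := lbb + k * Pmax with hvdef
      have hax : 0 < ax := by have := hx.1; positivity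
      have hay : 0 < ay := by
        have hy0 : (0:ℝ) ≤ y := hy.1
        positivity
      have hv : 0 < v := by positivity
      have haxy : ax < ay := by
        have := mul_lt_mul_of_pos_left hlt hk
        simp only [haxdef, haydef]; linarith
      have hayv : ay < v := by
        have := mul_lt_mul_of_pos_left hy.2 hk
        simp only [haydef, hvdef]; linarith
      have haxv : ax < v := haxy.trans hayv
      have key := strictConcaveOn_log_Ioi.secant_strict_mono (a := v)
        (x := ax) (y := ay) hv hax hay haxv.ne hayv.ne haxy
      have e1 : (Real.log ax - Real.log v) / (ax - v)
          = (Real.log v - Real.log ax) / (v - ax) := by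
        rw [← neg_div_neg_eq]; congr 1 <;> ring
      have e2 : (Real.log ay - Real.log v) / (ay - v)
          = (Real.log v - Real.log ay) / (v - ay) := by
        rw [← neg_div_neg_eq]; congr 1 <;> ring
      rw [e1, e2] at key
      -- key : slope(ay) < slope(ax)
      rw [hδ x, hδ y]
      rw [Real.log_div hv.ne' hax.ne', Real.log_div hv.ne' hay.ne']
      have hxden : (Pmax - x) * (lab * phi * mu) = v - ax := by
        simp only [hvdef, haxdef, hkdef]; ring
      have hyden : (Pmax - y) * (lab * phi * mu) = v - ay := by
        simp only [hvdef, haydef, hkdef]; ring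
      rw [hxden, hyden]
      have hmul : lbb * Real.exp (-(lab * mu * sb2)) * ((Real.log v - Real.log ay) / (v - ay))
          ≤ lbb * Real.exp (-(lab * mu * sb2)) * ((Real.log v - Real.log ax) / (v - ax)) :=
        mul_le_mul_of_nonneg_left key.le (by positivity)
      have r1 : lbb * Real.exp (-(lab * mu * sb2)) / (v - ax) * (Real.log v - Real.log ax)
          = lbb * Real.exp (-(lab * mu * sb2)) * ((Real.log v - Real.log ax) / (v - ax)) := by
        ring
      have r2 : lbb * Real.exp (-(lab * mu * sb2)) / (v - ay) * (Real.log v - Real.log ay)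
          = lbb * Real.exp (-(lab * mu * sb2)) * ((Real.log v - Real.log ay) / (v - ay)) := by
        ring
      rw [r1, r2]
      linarith
  refine ⟨hPEanti, hδmono, ?_⟩
  intro τ Rab hRab Pmin hPmin hfeas
  have h0mem : (0:ℝ) ∈ Ico (0:ℝ) Pmax := ⟨le_refl 0, hPmax⟩
  have hδle : δ 0 ≤ δ Pmin := hδmono h0mem hPmin hPmin.1
  constructor
  · have : π1 * Rab * (1 - δ Pmin) ≤ π1 * Rab * (1 - δ 0) := by
      apply mul_le_mul_of_nonneg_left _ (by positivity)
      linarith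
    linarith
  · rcases eq_or_lt_of_le hPmin.1 with h0 | h0
    · rw [← h0]
    · exact (hPEanti h0mem hPmin h0).le
end

section
/- Let $\lambda_{ab}, \lambda_{bb}, \mu, \phi > 0$ and $\sigma_b^2 \ge 0$, and for $P_{\max} > 0$ define $\delta_{ab}(P_{\max}) = 1 - \frac{\lambda_{bb} e^{-\lambda_{ab}\mu\sigma_b^2}}{\lambda_{ab}\phi\mu P_{\max}}\ln\!\left[\frac{\lambda_{bb}+\lambda_{ab}\phi\mu P_{\max}}{\lambda_{bb}}\right]$. Then $\delta_{ab}$ is continuous and strictly increasing on $(0,\infty)$, $\delta_{ab}(P_{\max}) \to 1 - e^{-\lambda_{ab}\mu\sigma_b^2}$ as $P_{\max} \to 0^+$, and $\delta_{ab}(P_{\max}) \to 1$ as $P_{\max} \to \infty$. Consequently, for every target value $d$ with $1 - e^{-\lambda_{ab}\mu\sigma_b^2} < d < 1$ there exists a unique $P_{\max}^\dagger > 0$ such that $\delta_{ab}(P_{\max}^\dagger) = d$. -/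
open Real Set Filter

noncomputable def gfun (x : ℝ) : ℝ := Real.log (1 + x) / x

lemma gfun_hasDerivAt {x : ℝ} (hx : 0 < x) :
    HasDerivAt gfun ((1 / (1 + x) * x - Real.log (1 + x) * 1) / x ^ 2) x := by
  have h1 : HasDerivAt (fun x : ℝ => Real.log (1 + x)) (1 / (1 + x)) x := by
    have := (Real.hasDerivAt_log (by linarith : (1:ℝ) + x ≠ 0)).comp x
      ((hasDerivAt_const x (1:ℝ)).add (hasDerivAt_id x))
    simpa [one_div, Function.comp_def] using this
  exact h1.div (hasDerivAt_id x) (ne_of_gt hx)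

lemma log_gt {x : ℝ} (hx : 0 < x) : x / (1 + x) < Real.log (1 + x) := by
  have h1x : (0:ℝ) < 1 + x := by linarith
  have := Real.log_lt_sub_one_of_pos (x := (1 + x)⁻¹) (by positivity)
    (by intro h; rw [inv_eq_one] at h; linarith)
  rw [Real.log_inv] at this
  have : -(1 + x)⁻¹ + 1 < Real.log (1 + x) := by linarith
  calc x / (1 + x) = -(1+x)⁻¹ + 1 := by field_simp; ring
    _ < Real.log (1 + x) := this

lemma gfun_anti : StrictAntiOn gfun (Ioi 0) := by
  apply strictAntiOn_of_deriv_neg (convex_Ioi 0)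
  · exact fun x hx => ((gfun_hasDerivAt hx).continuousAt).continuousWithinAt
  · intro x hx
    rw [interior_Ioi] at hx
    have hx' : (0:ℝ) < x := hx
    rw [(gfun_hasDerivAt hx').deriv]
    have := log_gt hx'
    have hx2 : (0:ℝ) < x ^ 2 := by positivity
    have h1x : (0:ℝ) < 1 + x := by linarith
    apply div_neg_of_neg_of_pos _ hx2
    have : 1 / (1 + x) * x = x / (1 + x) := by ring
    rw [this]; linarith

lemma gfun_cont : ContinuousOn gfun (Ioi 0) :=
  fun x hx => ((gfun_hasDerivAt hx).differentiableAt.continuousAt).continuousWithinAt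

lemma gfun_tendsto_zero : Tendsto gfun (nhdsWithin 0 (Ioi 0)) (nhds 1) := by
  have h1 : HasDerivAt (fun x : ℝ => Real.log (1 + x)) 1 0 := by
    have := (Real.hasDerivAt_log (by norm_num : (1:ℝ) + 0 ≠ 0)).comp 0
      ((hasDerivAt_const 0 (1:ℝ)).add (hasDerivAt_id 0))
    simpa [Function.comp_def] using this
  have h2 := hasDerivAt_iff_tendsto_slope.mp h1
  have h3 : Tendsto (slope (fun x : ℝ => Real.log (1 + x)) 0) (nhdsWithin 0 (Ioi 0)) (nhds 1) :=
    h2.mono_left (nhdsWithin_mono 0 (fun x hx => ne_of_gt hx))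
  apply h3.congr'
  filter_upwards [self_mem_nhdsWithin] with x hx
  simp [slope, gfun, div_eq_inv_mul]

lemma gfun_tendsto_atTop : Tendsto gfun atTop (nhds 0) := by
  have h0 : Tendsto (fun x : ℝ => Real.log x / x) atTop (nhds 0) :=
    Real.isLittleO_log_id_atTop.tendsto_div_nhds_zero
  have h1 : Tendsto (fun x : ℝ => Real.log (1 + x) / (1 + x)) atTop (nhds 0) :=
    h0.comp (tendsto_atTop_add_const_left _ 1 tendsto_id)
  have h2 : Tendsto (fun x : ℝ => (1 + x) / x) atTop (nhds 1) := by
    have h := (tendsto_inv_atTop_zero.add tendsto_const_nhds :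
      Tendsto (fun x : ℝ => x⁻¹ + 1) atTop (nhds (0 + 1)))
    rw [zero_add] at h
    apply h.congr'
    filter_upwards [eventually_gt_atTop (0:ℝ)] with x hx
    field_simp
  have h3 := h1.mul h2
  rw [zero_mul] at h3
  apply h3.congr'
  filter_upwards [eventually_gt_atTop (0:ℝ)] with x hx
  have h1x : (1:ℝ) + x ≠ 0 := by linarith
  unfold gfun; field_simp

/-- The outage probability `δ_ab(Pmax)` (with `Pmin = 0`) is continuous and strictly
increasing on `(0,∞)`, tends to `1 - e^{-λ_ab μ σ_b²}` as `Pmax → 0⁺`, tends to `1`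
as `Pmax → ∞`, and hence takes every value `d ∈ (1 - e^{-λ_ab μ σ_b²}, 1)` at a
unique `Pmax† > 0`. -/
theorem stmt_16 (lab lbb mu phi sb2 : ℝ)
    (hlab : 0 < lab) (hlbb : 0 < lbb) (hmu : 0 < mu) (hphi : 0 < phi) (hsb2 : 0 ≤ sb2)
    (δ : ℝ → ℝ)
    (hδ : ∀ Pmax, δ Pmax =
      1 - lbb * exp (-(lab * mu * sb2)) / (lab * phi * mu * Pmax) *
        log ((lbb + lab * phi * mu * Pmax) / lbb)) :
    ContinuousOn δ (Ioi 0) ∧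
    StrictMonoOn δ (Ioi 0) ∧
    Tendsto δ (nhdsWithin 0 (Ioi 0)) (nhds (1 - exp (-(lab * mu * sb2)))) ∧
    Tendsto δ atTop (nhds 1) ∧
    ∀ d : ℝ, 1 - exp (-(lab * mu * sb2)) < d → d < 1 →
      ∃! P : ℝ, 0 < P ∧ δ P = d := by
  set k := exp (-(lab * mu * sb2)) with hkdef
  have hk : 0 < k := exp_pos _
  set c := lab * phi * mu with hcdef
  have hc : 0 < c := by positivity
  set r := c / lbb with hrdef
  have hr : 0 < r := by positivity
  -- key rewriting
  have key : ∀ P : ℝ, 0 < P → δ P = 1 - k * gfun (r * P) := by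
    intro P hP
    rw [hδ, gfun]
    have harg : (lbb + c * P) / lbb = 1 + r * P := by
      rw [hrdef]; field_simp
    rw [harg]
    have hcoef : lbb * k / (c * P) = k / (r * P) := by
      rw [hrdef]; field_simp
    rw [hcoef]
    ring
  have hmaps : ∀ P : ℝ, P ∈ Ioi (0:ℝ) → r * P ∈ Ioi (0:ℝ) :=
    fun P hP => mul_pos hr hP
  -- strict monotonicity
  have hmono : StrictMonoOn δ (Ioi 0) := by
    intro a ha b hb hab
    rw [key a ha, key b hb]
    have hg : gfun (r * b) < gfun (r * a) :=
      gfun_anti (hmaps a ha) (hmaps b hb) (by exact mul_lt_mul_of_pos_left hab hr)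
    nlinarith
  -- continuity
  have hcont : ContinuousOn δ (Ioi 0) := by
    have h1 : ContinuousOn (fun P : ℝ => 1 - k * gfun (r * P)) (Ioi 0) := by
      apply continuousOn_const.sub
      apply continuousOn_const.mul
      exact gfun_cont.comp ((continuous_const.mul continuous_id).continuousOn) hmaps
    exact h1.congr (fun P hP => key P hP)
  -- limit at 0+
  have hlim0 : Tendsto δ (nhdsWithin 0 (Ioi 0)) (nhds (1 - k)) := by
    have hrp : Tendsto (fun P : ℝ => r * P) (nhdsWithin 0 (Ioi 0)) (nhdsWithin 0 (Ioi 0)) := by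
      apply tendsto_nhdsWithin_of_tendsto_nhds_of_eventually_within
      · have h0 : Tendsto (fun P : ℝ => r * P) (nhds 0) (nhds (r * 0)) :=
          (continuous_const.mul continuous_id).tendsto (0:ℝ)
        rw [mul_zero] at h0
        exact h0.mono_left nhdsWithin_le_nhds
      · filter_upwards [self_mem_nhdsWithin] with P hP using hmaps P hP
    have h1 : Tendsto (fun P : ℝ => 1 - k * gfun (r * P)) (nhdsWithin 0 (Ioi 0)) (nhds (1 - k)) := by
      have hg : Tendsto (fun P : ℝ => gfun (r * P)) (nhdsWithin 0 (Ioi 0)) (nhds 1) :=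
        gfun_tendsto_zero.comp hrp
      have h2 : Tendsto (fun P : ℝ => 1 - k * gfun (r * P)) (nhdsWithin 0 (Ioi 0))
          (nhds (1 - k * 1)) := tendsto_const_nhds.sub (hg.const_mul k)
      rwa [mul_one] at h2
    apply h1.congr'
    filter_upwards [self_mem_nhdsWithin] with P hP using (key P hP).symm
  -- limit at atTop
  have hlimT : Tendsto δ atTop (nhds 1) := by
    have hrp : Tendsto (fun P : ℝ => r * P) atTop atTop :=
      Tendsto.const_mul_atTop hr tendsto_id
    have h1 : Tendsto (fun P : ℝ => 1 - k * gfun (r * P)) atTop (nhds 1) := by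
      have hg : Tendsto (fun P : ℝ => gfun (r * P)) atTop (nhds 0) :=
        gfun_tendsto_atTop.comp hrp
      have h2 : Tendsto (fun P : ℝ => 1 - k * gfun (r * P)) atTop
          (nhds (1 - k * 0)) := tendsto_const_nhds.sub (hg.const_mul k)
      rwa [mul_zero, sub_zero] at h2
    apply h1.congr'
    filter_upwards [eventually_gt_atTop (0:ℝ)] with P hP using (key P hP).symm
  refine ⟨hcont, hmono, hlim0, hlimT, ?_⟩
  intro d hd1 hd2
  -- find a with δ a < d
  have hev0 : ∀ᶠ P in nhdsWithin 0 (Ioi 0), δ P < d := hlim0.eventually_lt_const hd1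
  have hne : (nhdsWithin (0:ℝ) (Ioi 0)).NeBot := nhdsGT_neBot 0
  obtain ⟨a, ha1, ha2⟩ := (hev0.and self_mem_nhdsWithin).exists
  -- find b with d < δ b
  have hevT : ∀ᶠ P in atTop, d < δ P := hlimT.eventually_const_lt hd2
  obtain ⟨b, hb1, hb2⟩ := (hevT.and (eventually_gt_atTop a)).exists
  have ha0 : (0:ℝ) < a := ha2
  have hb0 : (0:ℝ) < b := lt_trans ha0 hb2
  have hsub : Icc a b ⊆ Ioi 0 := fun x hx => lt_of_lt_of_le ha0 hx.1
  have hivt := intermediate_value_Icc (le_of_lt hb2) (hcont.mono hsub)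
  obtain ⟨P, hPmem, hPd⟩ := hivt ⟨le_of_lt ha1, le_of_lt hb1⟩
  have hP0 : 0 < P := lt_of_lt_of_le ha0 hPmem.1
  refine ⟨P, ⟨hP0, hPd⟩, ?_⟩
  rintro Q ⟨hQ0, hQd⟩
  exact hmono.injOn hQ0 hP0 (by rw [hQd, hPd])
end

section
/- Let $\lambda_{aw}, \lambda_{bw}, P_a > 0$, and for $P_{\max} > 0$ set $s(P_{\max}) = \frac{\lambda_{bw} P_a}{\lambda_{bw} P_a + \lambda_{aw} P_{\max}}$. Then $s$ is strictly decreasing in $P_{\max}$, and the function $P_{\max} \mapsto \tfrac{1}{2}\left(1 + s\ln s - s^2\right)$ (with $s = s(P_{\max})$) is strictly increasing on $(0,\infty)$: for $0 < P_1 < P_2$, $\tfrac{1}{2}\kappa(s(P_1)) < \tfrac{1}{2}\kappa(s(P_2))$. -/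
open Real

lemma kappa_strictAntiOn : StrictAntiOn (fun x : ℝ => 1 + x * Real.log x - x ^ 2) (Set.Icc 0 1) := by
  apply strictAntiOn_of_deriv_neg (convex_Icc 0 1)
  · exact (continuous_const.add Real.continuous_mul_log).sub (continuous_pow 2) |>.continuousOn
  · intro x hx
    rw [interior_Icc] at hx
    obtain ⟨hx0, hx1⟩ := hx
    have hd : HasDerivAt (fun x : ℝ => 1 + x * Real.log x - x ^ 2)
        (Real.log x + 1 - 2 * x) x := by
      have h1 := (Real.hasDerivAt_mul_log hx0.ne')
      have h2 : HasDerivAt (fun x : ℝ => x ^ 2) (2 * x) x := by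
        simpa using (hasDerivAt_pow 2 x)
      have h3 := ((hasDerivAt_const x (1:ℝ)).add h1).sub h2
      simp only [zero_add] at h3
      exact h3
    rw [hd.deriv]
    have hlog : Real.log x ≤ x - 1 := Real.log_le_sub_one_of_pos hx0
    nlinarith

/-- `s(Pmax) = λbw Pa / (λbw Pa + λaw Pmax)` is strictly decreasing in `Pmax`, and
`Pmax ↦ (1/2)(1 + s ln s - s²)` is strictly increasing on `(0,∞)`. -/
theorem stmt_17 (law lbw Pa : ℝ) (hlaw : 0 < law) (hlbw : 0 < lbw) (hPa : 0 < Pa)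
    (s : ℝ → ℝ) (hs : ∀ Pmax, s Pmax = lbw * Pa / (lbw * Pa + law * Pmax)) :
    (∀ P1 P2 : ℝ, 0 < P1 → P1 < P2 → s P2 < s P1) ∧
    (∀ P1 P2 : ℝ, 0 < P1 → P1 < P2 →
      (1 / 2) * (1 + s P1 * log (s P1) - (s P1) ^ 2) <
        (1 / 2) * (1 + s P2 * log (s P2) - (s P2) ^ 2)) := by
  have hc : 0 < lbw * Pa := mul_pos hlbw hPa
  have hmem : ∀ P : ℝ, 0 < P → s P ∈ Set.Icc (0:ℝ) 1 := by
    intro P hP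
    rw [hs]
    have hden : 0 < lbw * Pa + law * P := by positivity
    constructor
    · positivity
    · rw [div_le_one hden]; nlinarith
  have hdec : ∀ P1 P2 : ℝ, 0 < P1 → P1 < P2 → s P2 < s P1 := by
    intro P1 P2 h1 h12
    rw [hs, hs]
    apply div_lt_div_of_pos_left hc (by positivity)
    nlinarith
  refine ⟨hdec, fun P1 P2 h1 h12 => ?_⟩
  have := kappa_strictAntiOn (hmem P2 (h1.trans h12)) (hmem P1 h1) (hdec P1 P2 h1 h12)
  simp only at this
  linarith
end
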